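/- Let Q ∈ S^n satisfy min{Q_{ij} : 1 ≤ i, j ≤ n} = min{Q_{kk} : 1 ≤ k ≤ n} (the minimum entry of Q is attained on the diagonal), and let e ∈ ℝ^n be the all-ones vector. Then inf{⟨Q,X⟩ : X ∈ DN^n, ⟨e·eᵀ, X⟩ = 1} = inf{xᵀ·Q·x : x ∈ ℝ^n_+, eᵀ·x = 1}; that is, the doubly nonnegative programming relaxation of the standard quadratic optimization problem over the simplex is exact for such Q. -/

import Mathlib

open Matrix

noncomputable section

/-- The doubly nonnegative cone `DN^n = S^n_+ ∩ N^n`. -/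
def DN (n : ℕ) : Set (Matrix (Fin n) (Fin n) ℝ) :=
  {X | X.PosSemidef ∧ ∀ i j, 0 ≤ X i j}

/-- Gökmen–Yildirim: if the minimum entry of `Q` is attained on
the diagonal, the DNN relaxation of the standard quadratic optimization problem
over the simplex is exact.  Infima are taken in `EReal`. -/
theorem stmt_19 (n : ℕ) (Q : Matrix (Fin n) (Fin n) ℝ) (hQsym : Q.IsSymm)
    (hmin : ∃ k : Fin n, ∀ i j, Q k k ≤ Q i j) :
    sInf ((fun X : Matrix (Fin n) (Fin n) ℝ => (((Q * X).trace : ℝ) : EReal)) ''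
      {X | X ∈ DN n ∧
        ((vecMulVec (fun _ => (1 : ℝ)) (fun _ => (1 : ℝ))) * X).trace = 1}) =
    sInf ((fun x : Fin n → ℝ => ((dotProduct x (Q.mulVec x) : ℝ) : EReal)) ''
      {x | 0 ≤ x ∧ dotProduct (fun _ => (1 : ℝ)) x = 1}) := by
  obtain ⟨k, hk⟩ := hmin
  set v : Fin n → ℝ := Pi.single k 1 with hv
  have hL : sInf ((fun X : Matrix (Fin n) (Fin n) ℝ => (((Q * X).trace : ℝ) : EReal)) ''
      {X | X ∈ DN n ∧
        ((vecMulVec (fun _ => (1 : ℝ)) (fun _ => (1 : ℝ))) * X).trace = 1})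
      = ((Q k k : ℝ) : EReal) := by
    apply le_antisymm
    · apply sInf_le
      refine ⟨vecMulVec v v, ⟨⟨?_, ?_⟩, ?_⟩, ?_⟩
      · refine PosSemidef.of_dotProduct_mulVec_nonneg ?_ ?_
        · ext i j
          simp [vecMulVec_apply, mul_comm]
        · intro y
          have : star y ⬝ᵥ (vecMulVec v v).mulVec y = (v ⬝ᵥ y) * (v ⬝ᵥ y) := by
            simp [dotProduct, mulVec, vecMulVec_apply, Finset.mul_sum, Finset.sum_mul]
            ring_nf
            rw [Finset.sum_comm]
            congr 1; ext i; congr 1; ext j; ring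
          rw [this]
          exact mul_self_nonneg _
      · have hvnn : ∀ i, 0 ≤ v i := by
          intro i
          rcases eq_or_ne i k with h | h <;> simp [hv, Pi.single_apply, h]
        intro i j
        rw [vecMulVec_apply]
        exact mul_nonneg (hvnn i) (hvnn j)
      · simp [Matrix.trace, Matrix.mul_apply, vecMulVec_apply, hv, Pi.single_apply]
      · simp [Matrix.trace, Matrix.mul_apply, vecMulVec_apply, hv, Pi.single_apply]
    · apply le_sInf
      rintro y ⟨X, ⟨⟨hpsd, hnn⟩, hsum⟩, rfl⟩
      rw [EReal.coe_le_coe_iff]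
      have hsum' : ∑ i, ∑ j, X j i = 1 := by
        simpa [Matrix.trace, Matrix.mul_apply, vecMulVec_apply] using hsum
      have htr : (Q * X).trace = ∑ i, ∑ j, Q i j * X j i := by
        simp [Matrix.trace, Matrix.mul_apply]
      rw [htr]
      calc Q k k = ∑ i, ∑ j, Q k k * X j i := by
            have : ∑ i, ∑ j, Q k k * X j i = Q k k := by
              simp_rw [← Finset.mul_sum]
              rw [hsum', mul_one]
            exact this.symm
        _ ≤ ∑ i, ∑ j, Q i j * X j i := by
            apply Finset.sum_le_sum; intro i _
            apply Finset.sum_le_sum; intro j _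
            exact mul_le_mul_of_nonneg_right (hk i j) (hnn j i)
  have hR : sInf ((fun x : Fin n → ℝ => ((dotProduct x (Q.mulVec x) : ℝ) : EReal)) ''
      {x | 0 ≤ x ∧ dotProduct (fun _ => (1 : ℝ)) x = 1})
      = ((Q k k : ℝ) : EReal) := by
    apply le_antisymm
    · apply sInf_le
      refine ⟨v, ⟨?_, ?_⟩, ?_⟩
      · intro i
        simp [hv, Pi.single_apply]
        positivity
      · simp [dotProduct, hv, Pi.single_apply]
      · simp [dotProduct, mulVec, hv, Pi.single_apply]
    · apply le_sInf
      rintro y ⟨x, ⟨hx, hsum⟩, rfl⟩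
      rw [EReal.coe_le_coe_iff]
      have hsum' : ∑ i, x i = 1 := by simpa [dotProduct] using hsum
      have hdp : x ⬝ᵥ Q.mulVec x = ∑ i, ∑ j, x i * (Q i j * x j) := by
        simp [dotProduct, mulVec, Finset.mul_sum]
      rw [hdp]
      calc Q k k = ∑ i, ∑ j, x i * (Q k k * x j) := by
            have : ∑ i, ∑ j, x i * (Q k k * x j) = Q k k := by
              simp_rw [mul_comm (x _) _, mul_assoc, ← Finset.mul_sum]
              rw [Finset.sum_comm, ← Finset.sum_mul_sum, hsum']
              ring
            exact this.symm
        _ ≤ ∑ i, ∑ j, x i * (Q i j * x j) := by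
            apply Finset.sum_le_sum; intro i _
            apply Finset.sum_le_sum; intro j _
            exact mul_le_mul_of_nonneg_left
              (mul_le_mul_of_nonneg_right (hk i j) (hx j)) (hx i)
  rw [hL, hR]
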